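/- For m, n, a, b real with n > -1, m+n+1 > 0, a ≥ 0 and b ≥ 0, the normalized Nuttall Q-function 𝒬_{m,n}(a,b) = a^{-n} ∫_b^∞ x^m e^{-(x²+a²)/2} I_n(ax) dx satisfies the upper bound 𝒬_{m,n}(a,b) ≤ Γ((m+n+1)/2) · ₁F₁((m+n+1)/2; n+1; a²/2) / (Γ(n+1) · 2^{(n-m+1)/2} · e^{a²/2}). -/

import Mathlib

open MeasureTheory Real Filter

noncomputable def uGamma (a x : ℝ) : ℝ := ∫ t in Set.Ioi x, t ^ (a - 1) * Real.exp (-t)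

noncomputable def lGamma (a x : ℝ) : ℝ := ∫ t in Set.Ioc 0 x, t ^ (a - 1) * Real.exp (-t)

noncomputable def poch (x : ℝ) (l : ℕ) : ℝ := ∏ i ∈ Finset.range l, (x + i)

noncomputable def besselI (n x : ℝ) : ℝ :=
  ∑' l : ℕ, (x / 2) ^ (n + 2 * (l : ℝ)) / ((l.factorial : ℝ) * Real.Gamma (n + (l : ℝ) + 1))

noncomputable def oneF₁ (α β x : ℝ) : ℝ :=
  ∑' i : ℕ, (poch α i / poch β i) * x ^ i / (i.factorial : ℝ)

noncomputable def nuttallQ (m n a b : ℝ) : ℝ :=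
  ∫ x in Set.Ioi b, x ^ m * Real.exp (-(x ^ 2 + a ^ 2) / 2) * besselI n (a * x)

noncomputable def nQ (m n a b : ℝ) : ℝ := a ^ (-n) * nuttallQ m n a b

noncomputable def marcumQ (ν a b : ℝ) : ℝ :=
  a ^ (1 - ν) * ∫ x in Set.Ioi b, x ^ ν * Real.exp (-(x ^ 2 + a ^ 2) / 2) * besselI (ν - 1) (a * x)

noncomputable def toronto (B m n r : ℝ) : ℝ :=
  2 * r ^ (n - m + 1) * Real.exp (-r ^ 2) *
    ∫ t in Set.Ioo 0 B, t ^ (m - n) * Real.exp (-t ^ 2) * besselI n (2 * r * t)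

lemma poch_pos {x : ℝ} (hx : 0 < x) (l : ℕ) : 0 < poch x l :=
  Finset.prod_pos fun i _ => by positivity

lemma poch_succ (x : ℝ) (l : ℕ) : poch x (l + 1) = poch x l * (x + l) :=
  Finset.prod_range_succ _ _

lemma Gamma_poch {x : ℝ} (hx : 0 < x) : ∀ l : ℕ, Real.Gamma (x + l) = Real.Gamma x * poch x l
  | 0 => by simp [poch]
  | (l + 1) => by
      have h1 : (x + l) ≠ 0 := by positivity
      have h2 : x + ((l + 1 : ℕ) : ℝ) = (x + l) + 1 := by push_cast; ring
      rw [h2, Real.Gamma_add_one h1, Gamma_poch hx l, poch_succ]; ring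

lemma poch_le_mul {c d K : ℝ} (hc : 0 < c) (hd : 0 < d) (hK1 : 1 ≤ K) (hK : c ≤ K * d) :
    ∀ l : ℕ, poch c l ≤ K ^ l * poch d l
  | 0 => by simp [poch]
  | (l + 1) => by
      have ih := poch_le_mul hc hd hK1 hK l
      have hdl : 0 < poch d l := poch_pos hd l
      have h1 : (0:ℝ) ≤ c + l := by positivity
      have h2 : c + l ≤ K * (d + l) := by nlinarith [Nat.cast_nonneg (α := ℝ) l]
      rw [poch_succ, poch_succ]
      calc poch c l * (c + l) ≤ (K ^ l * poch d l) * (K * (d + l)) := by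
            apply mul_le_mul ih h2 h1 (by positivity)
        _ = K ^ (l+1) * (poch d l * (d + l)) := by ring

lemma poch_ge {d : ℝ} (hd : 0 < d) : ∀ l : ℕ, (min 1 d) ^ l ≤ poch d l
  | 0 => by simp [poch]
  | (l + 1) => by
      have ih := poch_ge hd l
      have hμ : (0:ℝ) < min 1 d := lt_min one_pos hd
      have h2 : min 1 d ≤ d + l := le_trans (min_le_right _ _) (le_add_of_nonneg_right (Nat.cast_nonneg l))
      rw [poch_succ, pow_succ]
      exact mul_le_mul ih h2 hμ.le (poch_pos hd l).le

lemma gauss_integrable {s : ℝ} (hs : -1 < s) :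
    IntegrableOn (fun x : ℝ => x ^ s * Real.exp (-(x ^ 2) / 2)) (Set.Ioi 0) := by
  have h := integrableOn_rpow_mul_exp_neg_mul_rpow hs (two_pos (α := ℝ)) (by norm_num : (0:ℝ) < 1/2)
  refine h.congr_fun (fun x hx => ?_) measurableSet_Ioi
  dsimp only
  rw [show ((2:ℝ)) = ((2:ℕ):ℝ) by norm_num, Real.rpow_natCast]
  ring_nf

lemma gauss_moment {s : ℝ} (hs : -1 < s) :
    ∫ x in Set.Ioi (0:ℝ), x ^ s * Real.exp (-(x ^ 2) / 2)
      = 2 ^ ((s - 1) / 2) * Real.Gamma ((s + 1) / 2) := by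
  have h := integral_rpow_mul_exp_neg_mul_rpow two_pos hs (by norm_num : (0:ℝ) < 1/2)
  have heq : ∫ x in Set.Ioi (0:ℝ), x ^ s * Real.exp (-(x ^ 2) / 2)
      = ∫ x in Set.Ioi (0:ℝ), x ^ s * Real.exp (-(1/2) * x ^ (2:ℝ)) := by
    refine setIntegral_congr_fun measurableSet_Ioi (fun x hx => ?_)
    rw [show ((2:ℝ)) = ((2:ℕ):ℝ) by norm_num, Real.rpow_natCast]
    ring_nf
  rw [heq, h]
  have h1 : ((1:ℝ)/2) ^ (-(s + 1) / 2) = 2 ^ ((s+1)/2) := by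
    rw [show (1:ℝ)/2 = (2:ℝ) ^ (-1:ℝ) by rw [Real.rpow_neg_one]; norm_num,
      ← Real.rpow_mul (by norm_num : (0:ℝ) ≤ 2)]
    congr 1; ring
  have h2 : (2:ℝ) ^ ((s+1)/2) * ((1:ℝ)/2) = 2 ^ ((s-1)/2) := by
    rw [show (1:ℝ)/2 = (2:ℝ) ^ (-1:ℝ) by rw [Real.rpow_neg_one]; norm_num,
      ← Real.rpow_add two_pos]
    congr 1; ring
  rw [h1, h2]

lemma Gamma_shift_pos {n : ℝ} (hn : -1 < n) (l : ℕ) : 0 < Real.Gamma (n + l + 1) :=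
  Real.Gamma_pos_of_pos (by have := Nat.cast_nonneg (α := ℝ) l; linarith)

lemma besselI_nonneg {n x : ℝ} (hn : -1 < n) (hx : 0 ≤ x) : 0 ≤ besselI n x := by
  refine tsum_nonneg fun l => div_nonneg (Real.rpow_nonneg (by positivity) _) ?_
  exact mul_nonneg (Nat.cast_nonneg _) (Gamma_shift_pos hn l).le

lemma besselI_zero {n : ℝ} (hn : -1 < n) (hn0 : n ≠ 0) : besselI n 0 = 0 := by
  rw [besselI]
  convert tsum_zero with l
  have hne : n + 2 * (l:ℝ) ≠ 0 := by
    rcases Nat.eq_zero_or_pos l with h | h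
    · simpa [h] using hn0
    · have h1 : (1:ℝ) ≤ (l:ℝ) := by exact_mod_cast h
      intro hcon; linarith
  rw [zero_div, Real.zero_rpow hne, zero_div]

lemma besselI_zero_zero : besselI 0 0 = 1 := by
  rw [besselI, tsum_eq_single 0]
  · norm_num
  · intro l hl
    have h1 : (1:ℝ) ≤ (l:ℝ) := by exact_mod_cast Nat.one_le_iff_ne_zero.mpr hl
    have hne : (0:ℝ) + 2 * (l:ℝ) ≠ 0 := by intro hcon; linarith
    rw [zero_div, Real.zero_rpow hne, zero_div]
lemma oneF₁_zero (α β : ℝ) : oneF₁ α β 0 = 1 := by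
  rw [oneF₁, tsum_eq_single 0]
  · simp [poch]
  · intro i hi; simp [zero_pow hi]

lemma oneF₁_nonneg {α β : ℝ} (hα : 0 < α) (hβ : 0 < β) {x : ℝ} (hx : 0 ≤ x) :
    0 ≤ oneF₁ α β x := by
  refine tsum_nonneg fun i => div_nonneg (mul_nonneg ?_ (pow_nonneg hx i)) (Nat.cast_nonneg _)
  exact div_nonneg (poch_pos hα i).le (poch_pos hβ i).le

lemma aux_summable {n : ℝ} (hn : -1 < n) {q : ℝ} (hq : 0 ≤ q) :
    Summable (fun l : ℕ => q ^ l / ((l.factorial : ℝ) * Real.Gamma (n + l + 1))) := by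
  have hn1 : (0:ℝ) < n + 1 := by linarith
  have hμ : (0:ℝ) < min 1 (n+1) := lt_min one_pos hn1
  have hG1 : (0:ℝ) < Real.Gamma (n+1) := Real.Gamma_pos_of_pos hn1
  refine Summable.of_nonneg_of_le (fun l => div_nonneg (pow_nonneg hq l) (mul_nonneg (Nat.cast_nonneg _) (Gamma_shift_pos hn l).le)) (fun l => ?_)
    ((Real.summable_pow_div_factorial (q / min 1 (n+1))).mul_right (Real.Gamma (n+1))⁻¹)
  have hGl := Gamma_shift_pos hn l
  have hfac : (0:ℝ) < (l.factorial : ℝ) := by exact_mod_cast l.factorial_pos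
  have h1 : Real.Gamma (n + l + 1) = Real.Gamma (n+1) * poch (n+1) l := by
    rw [show n + (l:ℝ) + 1 = (n+1) + l by ring, Gamma_poch hn1]
  have hsmall : (l.factorial : ℝ) * (Real.Gamma (n+1) * (min 1 (n+1)) ^ l)
      ≤ (l.factorial : ℝ) * Real.Gamma (n + l + 1) := by
    rw [h1]
    exact mul_le_mul_of_nonneg_left (mul_le_mul_of_nonneg_left (poch_ge hn1 l) hG1.le) hfac.le
  calc q ^ l / ((l.factorial : ℝ) * Real.Gamma (n + l + 1))
      ≤ q ^ l / ((l.factorial : ℝ) * (Real.Gamma (n+1) * (min 1 (n+1)) ^ l)) := by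
        apply div_le_div_of_nonneg_left (by positivity) (by positivity) hsmall
    _ = (q / min 1 (n+1)) ^ l / (l.factorial : ℝ) * (Real.Gamma (n+1))⁻¹ := by
        rw [div_pow]
        field_simp [hμ.ne', hG1.ne', hfac.ne']

lemma main_pos {m n a : ℝ} (hn : -1 < n) (hmn : 0 < m + n + 1) (ha : 0 < a) :
    IntegrableOn (fun x => x ^ m * Real.exp (-(x ^ 2 + a ^ 2) / 2) * besselI n (a * x))
      (Set.Ioi 0) ∧
    a ^ (-n) * ∫ x in Set.Ioi (0:ℝ), x ^ m * Real.exp (-(x ^ 2 + a ^ 2) / 2) * besselI n (a * x)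
      = Real.Gamma ((m + n + 1) / 2) * oneF₁ ((m + n + 1) / 2) (n + 1) (a ^ 2 / 2) /
        (Real.Gamma (n + 1) * (2 : ℝ) ^ ((n - m + 1) / 2) * Real.exp (a ^ 2 / 2)) := by
  have hn1 : (0:ℝ) < n + 1 := by linarith
  have hc : (0:ℝ) < (m + n + 1) / 2 := by linarith
  set c : ℝ := (m + n + 1) / 2 with hcdef
  set C : ℕ → ℝ := fun l => Real.exp (-(a ^ 2) / 2) * (a ^ 2) ^ l *
      (2:ℝ) ^ (-(n + 2 * (l:ℝ))) / ((l.factorial : ℝ) * Real.Gamma (n + (l:ℝ) + 1)) with hCdef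
  set g : ℕ → ℝ → ℝ :=
      fun l x => C l * (x ^ (m + n + 2 * (l:ℝ)) * Real.exp (-(x ^ 2) / 2)) with hgdef
  have hCpos : ∀ l, 0 < C l := fun l => by
    have := Gamma_shift_pos hn l
    have hf : (0:ℝ) < (l.factorial : ℝ) := by exact_mod_cast l.factorial_pos
    have h2 : (0:ℝ) < (2:ℝ) ^ (-(n + 2 * (l:ℝ))) := Real.rpow_pos_of_pos two_pos _
    positivity
  have hsl : ∀ l : ℕ, (-1:ℝ) < m + n + 2 * (l:ℝ) := fun l => by
    have := Nat.cast_nonneg (α := ℝ) l; linarith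
  -- pointwise expansion
  have hpt : ∀ x : ℝ, 0 < x →
      a ^ (-n) * (x ^ m * Real.exp (-(x ^ 2 + a ^ 2) / 2) * besselI n (a * x))
        = ∑' l, g l x := by
    intro x hx
    rw [besselI, ← tsum_mul_left, ← tsum_mul_left]
    refine tsum_congr fun l => ?_
    have e1 : (a * x / 2 : ℝ) ^ (n + 2 * (l:ℝ))
        = a ^ (n + 2 * (l:ℝ)) * x ^ (n + 2 * (l:ℝ)) * ((2:ℝ) ^ (n + 2 * (l:ℝ)))⁻¹ := by
      rw [Real.div_rpow (by positivity) (by norm_num), Real.mul_rpow ha.le hx.le,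
        div_eq_mul_inv]
    have e2 : (a ^ 2 : ℝ) ^ l = a ^ (-n) * a ^ (n + 2 * (l:ℝ)) := by
      rw [← Real.rpow_add ha, show -n + (n + 2 * (l:ℝ)) = ((2 * l : ℕ) : ℝ) by push_cast; ring,
        Real.rpow_natCast, pow_mul]
    have e3 : (x:ℝ) ^ (m + n + 2 * (l:ℝ)) = x ^ m * x ^ (n + 2 * (l:ℝ)) := by
      rw [← Real.rpow_add hx]; congr 1; ring
    have e4 : Real.exp (-(x ^ 2 + a ^ 2) / 2)
        = Real.exp (-(x ^ 2) / 2) * Real.exp (-(a ^ 2) / 2) := by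
      rw [← Real.exp_add]; congr 1; ring
    have e5 : ((2:ℝ) ^ (n + 2 * (l:ℝ)))⁻¹ = (2:ℝ) ^ (-(n + 2 * (l:ℝ))) :=
      (Real.rpow_neg (by norm_num) _).symm
    rw [hgdef, hCdef]
    simp only
    rw [e4, e1, e5, e2, e3]
    ring
  -- value of each integral
  have hval : ∀ l, ∫ x in Set.Ioi (0:ℝ), g l x
      = C l * ((2:ℝ) ^ ((m + n + 2 * (l:ℝ) - 1) / 2) * Real.Gamma (c + l)) := by
    intro l
    rw [hgdef]
    simp only
    rw [integral_const_mul, gauss_moment (hsl l)]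
    congr 2
    rw [hcdef]; ring
  -- termwise identity with the RHS series
  set R : ℕ → ℝ := fun l => Real.Gamma c *
      ((poch c l / poch (n+1) l) * (a ^ 2 / 2) ^ l / (l.factorial : ℝ)) /
      (Real.Gamma (n + 1) * (2:ℝ) ^ ((n - m + 1) / 2) * Real.exp (a ^ 2 / 2)) with hRdef
  have htR : ∀ l, C l * ((2:ℝ) ^ ((m + n + 2 * (l:ℝ) - 1) / 2) * Real.Gamma (c + l)) = R l := by
    intro l
    have hfac : (0:ℝ) < (l.factorial : ℝ) := by exact_mod_cast l.factorial_pos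
    have hP2 := poch_pos hn1 l
    have hG2 : (0:ℝ) < Real.Gamma (n + 1) := Real.Gamma_pos_of_pos hn1
    have eΓ : Real.Gamma (n + (l:ℝ) + 1) = Real.Gamma (n + 1) * poch (n+1) l := by
      rw [show n + (l:ℝ) + 1 = (n+1) + l by ring, Gamma_poch hn1]
    have ez : (2:ℝ) ^ ((m + n + 2 * (l:ℝ) - 1) / 2)
        = (2:ℝ) ^ (n + 2 * (l:ℝ)) * ((2:ℝ) ^ ((n - m + 1) / 2))⁻¹ * (((2:ℝ) ^ (l:ℕ)))⁻¹ := by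
      rw [← Real.rpow_natCast 2 l,
        ← Real.rpow_neg (by norm_num : (0:ℝ) ≤ 2) ((n - m + 1) / 2),
        ← Real.rpow_neg (by norm_num : (0:ℝ) ≤ 2) (l:ℝ),
        ← Real.rpow_add two_pos, ← Real.rpow_add two_pos]
      congr 1; ring
    have ew : (2:ℝ) ^ (-(n + 2 * (l:ℝ))) = ((2:ℝ) ^ (n + 2 * (l:ℝ)))⁻¹ :=
      Real.rpow_neg (by norm_num) _
    have e8 : (a ^ 2 / 2 : ℝ) ^ l = (a ^ 2) ^ l * (((2:ℝ) ^ (l:ℕ)))⁻¹ := by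
      rw [div_pow, div_eq_mul_inv]
    have e9 : Real.exp (-(a ^ 2) / 2) = (Real.exp (a ^ 2 / 2))⁻¹ := by
      rw [neg_div, Real.exp_neg]
    have hW : ((2:ℝ) ^ (n + 2 * (l:ℝ))) ≠ 0 := (Real.rpow_pos_of_pos two_pos _).ne'
    have hu : ((2:ℝ) ^ ((n - m + 1) / 2)) ≠ 0 := (Real.rpow_pos_of_pos two_pos _).ne'
    have hv : (((2:ℝ) ^ (l:ℕ))) ≠ 0 := (pow_pos two_pos l).ne'
    have hE : Real.exp (a ^ 2 / 2) ≠ 0 := (Real.exp_pos _).ne'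
    rw [hRdef, hCdef]
    simp only
    rw [Gamma_poch hc l, eΓ, ez, ew, e8, e9]
    field_simp
  -- summability of the RHS series
  have hwsum : Summable (fun l => (poch c l / poch (n+1) l) * (a ^ 2 / 2) ^ l
      / (l.factorial : ℝ)) := by
    set K : ℝ := max 1 (c / (n+1)) with hKdef
    have hK1 : (1:ℝ) ≤ K := le_max_left _ _
    have hK : c ≤ K * (n+1) := by
      have h1 : c / (n+1) ≤ K := le_max_right _ _
      calc c = c / (n+1) * (n+1) := by field_simp
        _ ≤ K * (n+1) := mul_le_mul_of_nonneg_right h1 hn1.le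
    refine Summable.of_nonneg_of_le (fun l => ?_) (fun l => ?_)
      (Real.summable_pow_div_factorial (K * (a ^ 2 / 2)))
    · have := poch_pos hc l; have := poch_pos hn1 l
      have hf : (0:ℝ) < (l.factorial : ℝ) := by exact_mod_cast l.factorial_pos
      positivity
    · have hf : (0:ℝ) < (l.factorial : ℝ) := by exact_mod_cast l.factorial_pos
      have h1 : poch c l / poch (n+1) l ≤ K ^ l :=
        (div_le_iff₀ (poch_pos hn1 l)).mpr (poch_le_mul hc hn1 hK1 hK l)
      have h2 : (0:ℝ) ≤ (a ^ 2 / 2) ^ l := by positivity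
      calc poch c l / poch (n+1) l * (a ^ 2 / 2) ^ l / (l.factorial : ℝ)
          ≤ K ^ l * (a ^ 2 / 2) ^ l / (l.factorial : ℝ) := by
            exact (div_le_div_iff_of_pos_right hf).mpr (mul_le_mul_of_nonneg_right h1 h2)
        _ = (K * (a ^ 2 / 2)) ^ l / (l.factorial : ℝ) := by rw [mul_pow]
  have hRsum : Summable R := by
    rw [hRdef]
    exact (hwsum.mul_left _).div_const _
  have htsum : Summable (fun l => C l * ((2:ℝ) ^ ((m + n + 2 * (l:ℝ) - 1) / 2)
      * Real.Gamma (c + l))) := hRsum.congr fun l => (htR l).symm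
  have htnn : ∀ l, 0 ≤ C l * ((2:ℝ) ^ ((m + n + 2 * (l:ℝ) - 1) / 2) * Real.Gamma (c + l)) := by
    intro l
    have h1 := Real.rpow_pos_of_pos two_pos ((m + n + 2 * (l:ℝ) - 1) / 2)
    have h2 : (0:ℝ) < Real.Gamma (c + l) := by
      apply Real.Gamma_pos_of_pos; have := Nat.cast_nonneg (α := ℝ) l; linarith
    exact le_of_lt (mul_pos (hCpos l) (mul_pos h1 h2))
  -- measurability, nonnegativity, integrability of each term
  have hgmeas : ∀ l, Measurable (g l) := by
    intro l
    rw [hgdef]; simp only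
    fun_prop
  have hgnn : ∀ l, ∀ x ∈ Set.Ioi (0:ℝ), 0 ≤ g l x := by
    intro l x hx
    have hx' : (0:ℝ) < x := hx
    rw [hgdef]; simp only
    exact mul_nonneg (hCpos l).le
      (mul_nonneg (Real.rpow_nonneg hx'.le _) (Real.exp_nonneg _))
  have hgint : ∀ l, IntegrableOn (g l) (Set.Ioi 0) := by
    intro l
    rw [hgdef]; simp only
    exact (gauss_integrable (hsl l)).const_mul _
  have hvalsum : Summable (fun l => ∫ x in Set.Ioi (0:ℝ), g l x) :=
    htsum.congr fun l => (hval l).symm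
  have hnorm : ∀ l, (∫ x in Set.Ioi (0:ℝ), ‖g l x‖) = ∫ x in Set.Ioi (0:ℝ), g l x := by
    intro l
    refine setIntegral_congr_fun measurableSet_Ioi fun x hx => ?_
    exact Real.norm_of_nonneg (hgnn l x hx)
  have hnormsum : Summable (fun l => ∫ x in Set.Ioi (0:ℝ), ‖g l x‖) :=
    hvalsum.congr fun l => (hnorm l).symm
  have hexch : ∫ x in Set.Ioi (0:ℝ), (∑' l, g l x) = ∑' l, ∫ x in Set.Ioi (0:ℝ), g l x :=
    (MeasureTheory.integral_tsum_of_summable_integral_norm hgint hnormsum).symm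
  -- pointwise summability
  have hGsum : ∀ x : ℝ, 0 < x → Summable (fun l => g l x) := by
    intro x hx
    have base := aux_summable hn (q := a ^ 2 * x ^ 2 * (4:ℝ)⁻¹) (by positivity)
    refine (base.mul_left (Real.exp (-(a ^ 2) / 2) * (2:ℝ) ^ (-n) *
      (x ^ (m + n) * Real.exp (-(x ^ 2) / 2)))).congr fun l => ?_
    rw [hgdef, hCdef]; simp only
    have f1 : (x:ℝ) ^ (m + n + 2 * (l:ℝ)) = x ^ (m + n) * (x ^ 2) ^ l := by
      rw [show ((x ^ 2 : ℝ)) ^ l = x ^ (((2 * l : ℕ)) : ℝ) by rw [Real.rpow_natCast, pow_mul],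
        ← Real.rpow_add hx]
      congr 1; push_cast; ring
    have f2' : (2:ℝ) ^ (-(2 * (l:ℝ))) = ((4:ℝ)⁻¹) ^ l := by
      rw [Real.rpow_neg (by norm_num), show (2 * (l:ℝ)) = ((2 * l : ℕ) : ℝ) by push_cast; ring,
        Real.rpow_natCast, pow_mul, ← inv_pow]
      norm_num
    have f2 : (2:ℝ) ^ (-(n + 2 * (l:ℝ))) = (2:ℝ) ^ (-n) * ((4:ℝ)⁻¹) ^ l := by
      rw [← f2', ← Real.rpow_add two_pos]
      congr 1; ring
    rw [f1, f2, mul_pow (a ^ 2 * x ^ 2), mul_pow (a ^ 2)]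
    ring
  -- a.e. strong measurability of the sum
  have hmeasG : AEStronglyMeasurable (fun x => ∑' l, g l x)
      (volume.restrict (Set.Ioi 0)) := by
    have hGm : Measurable (fun x => (∑' l, ENNReal.ofReal (g l x)).toReal) :=
      (Measurable.ennreal_tsum fun l => (hgmeas l).ennreal_ofReal).ennreal_toReal
    refine hGm.aestronglyMeasurable.congr ?_
    filter_upwards [ae_restrict_mem measurableSet_Ioi] with x hx
    have hnn : ∀ l, 0 ≤ g l x := fun l => hgnn l x hx
    rw [← ENNReal.ofReal_tsum_of_nonneg hnn (hGsum x hx),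
      ENNReal.toReal_ofReal (tsum_nonneg hnn)]
  -- integrability of the sum
  have hGint : IntegrableOn (fun x => ∑' l, g l x) (Set.Ioi 0) := by
    refine ⟨hmeasG, ?_⟩
    show (∫⁻ x in Set.Ioi 0, (‖∑' l, g l x‖₊ : ENNReal)) < ⊤
    calc (∫⁻ x in Set.Ioi 0, (‖∑' l, g l x‖₊ : ENNReal))
        = ∫⁻ x in Set.Ioi 0, ∑' l, ENNReal.ofReal (g l x) := by
          apply lintegral_congr_ae
          filter_upwards [ae_restrict_mem measurableSet_Ioi] with x hx
          have hnn : ∀ l, 0 ≤ g l x := fun l => hgnn l x hx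
          rw [← ENNReal.ofReal_tsum_of_nonneg hnn (hGsum x hx)]
          exact Real.enorm_eq_ofReal (tsum_nonneg hnn)
      _ = ∑' l, ∫⁻ x in Set.Ioi 0, ENNReal.ofReal (g l x) :=
          lintegral_tsum fun l => ((hgmeas l).ennreal_ofReal).aemeasurable
      _ = ∑' l, ENNReal.ofReal (∫ x in Set.Ioi (0:ℝ), g l x) := by
          refine tsum_congr fun l => ?_
          rw [← MeasureTheory.ofReal_integral_eq_lintegral_ofReal (hgint l)
            ((ae_restrict_mem measurableSet_Ioi).mono fun x hx => hgnn l x hx)]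
      _ = ENNReal.ofReal (∑' l, ∫ x in Set.Ioi (0:ℝ), g l x) :=
          (ENNReal.ofReal_tsum_of_nonneg
            (fun l => by rw [hval l]; exact htnn l) hvalsum).symm
      _ < ⊤ := ENNReal.ofReal_lt_top
  -- integrability of the Nuttall integrand
  have hint : IntegrableOn
      (fun x => x ^ m * Real.exp (-(x ^ 2 + a ^ 2) / 2) * besselI n (a * x)) (Set.Ioi 0) := by
    refine (hGint.const_mul (a ^ n)).congr ?_
    filter_upwards [ae_restrict_mem measurableSet_Ioi] with x hx
    rw [← hpt x hx, ← mul_assoc, ← Real.rpow_add ha, add_neg_cancel, Real.rpow_zero, one_mul]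
  refine ⟨hint, ?_⟩
  calc a ^ (-n) * ∫ x in Set.Ioi (0:ℝ), x ^ m * Real.exp (-(x ^ 2 + a ^ 2) / 2)
        * besselI n (a * x)
      = ∫ x in Set.Ioi (0:ℝ),
          a ^ (-n) * (x ^ m * Real.exp (-(x ^ 2 + a ^ 2) / 2) * besselI n (a * x)) :=
        (integral_const_mul _ _).symm
    _ = ∫ x in Set.Ioi (0:ℝ), (∑' l, g l x) :=
        setIntegral_congr_fun measurableSet_Ioi fun x hx => hpt x hx
    _ = ∑' l, ∫ x in Set.Ioi (0:ℝ), g l x := hexch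
    _ = ∑' l, R l := tsum_congr fun l => by rw [hval l, htR l]
    _ = Real.Gamma c * oneF₁ c (n + 1) (a ^ 2 / 2) /
        (Real.Gamma (n + 1) * (2:ℝ) ^ ((n - m + 1) / 2) * Real.exp (a ^ 2 / 2)) := by
        rw [oneF₁, ← tsum_mul_left, ← tsum_div_const]

theorem stmt4 (m n a b : ℝ) (hn : -1 < n) (hmn : 0 < m + n + 1) (ha : 0 ≤ a) (hb : 0 ≤ b) :
    nQ m n a b ≤
      Real.Gamma ((m + n + 1) / 2) * oneF₁ ((m + n + 1) / 2) (n + 1) (a ^ 2 / 2) /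
        (Real.Gamma (n + 1) * (2 : ℝ) ^ ((n - m + 1) / 2) * Real.exp (a ^ 2 / 2)) := by
  have hn1 : (0:ℝ) < n + 1 := by linarith
  have hc : (0:ℝ) < (m + n + 1) / 2 := by linarith
  rcases ha.eq_or_lt with h0 | hapos
  · subst h0
    by_cases hn0 : n = 0
    · subst hn0
      rw [nQ, nuttallQ]
      have hm : (-1:ℝ) < m := by linarith
      have hint_eq : (fun x : ℝ => x ^ m * Real.exp (-(x ^ 2 + (0:ℝ) ^ 2) / 2) *
          besselI 0 ((0:ℝ) * x)) = fun x : ℝ => x ^ m * Real.exp (-(x ^ 2) / 2) := by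
        funext x
        rw [zero_mul, besselI_zero_zero, mul_one]
        norm_num
      rw [hint_eq, neg_zero, Real.rpow_zero, one_mul]
      rw [show ((0:ℝ) ^ 2 / 2) = 0 by norm_num, oneF₁_zero, Real.exp_zero, zero_add,
        Real.Gamma_one]
      calc ∫ x in Set.Ioi b, x ^ m * Real.exp (-(x ^ 2) / 2)
          ≤ ∫ x in Set.Ioi (0:ℝ), x ^ m * Real.exp (-(x ^ 2) / 2) := by
            refine setIntegral_mono_set (gauss_integrable hm) ?_ ?_
            · filter_upwards [ae_restrict_mem measurableSet_Ioi] with x hx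
              have hx' : (0:ℝ) < x := hx
              exact mul_nonneg (Real.rpow_nonneg hx'.le m) (Real.exp_nonneg _)
            · exact HasSubset.Subset.eventuallyLE (Set.Ioi_subset_Ioi hb)
        _ = 2 ^ ((m - 1) / 2) * Real.Gamma ((m + 1) / 2) := gauss_moment hm
        _ = Real.Gamma ((m + 0 + 1) / 2) * 1 / (1 * 2 ^ ((0 - m + 1) / 2) * 1) := by
            rw [mul_one, one_mul, mul_one, show (m + 0 + 1 : ℝ) = m + 1 by ring,
              show (2:ℝ) ^ ((m - 1) / 2) = ((2:ℝ) ^ ((0 - m + 1) / 2))⁻¹ by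
                rw [← Real.rpow_neg (by norm_num)]; congr 1; ring,
              div_eq_mul_inv]
            ring
    · rw [nQ, nuttallQ]
      have hz : (∫ x in Set.Ioi b, x ^ m * Real.exp (-(x ^ 2 + (0:ℝ) ^ 2) / 2) *
          besselI n ((0:ℝ) * x)) = 0 := by
        rw [show (fun x : ℝ => x ^ m * Real.exp (-(x ^ 2 + (0:ℝ) ^ 2) / 2) *
            besselI n ((0:ℝ) * x)) = fun _ => (0:ℝ) from
          funext fun x => by rw [zero_mul, besselI_zero hn hn0, mul_zero]]
        simp
      rw [hz, mul_zero]
      apply div_nonneg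
      · exact mul_nonneg (Real.Gamma_pos_of_pos hc).le
          (oneF₁_nonneg hc hn1 (by positivity))
      · have h1 := Real.Gamma_pos_of_pos hn1
        have h2 := Real.rpow_pos_of_pos (two_pos (α := ℝ)) ((n - m + 1) / 2)
        positivity
  · obtain ⟨hint, heq⟩ := main_pos hn hmn hapos
    rw [nQ, nuttallQ, ← heq]
    refine mul_le_mul_of_nonneg_left ?_ (Real.rpow_nonneg ha _)
    refine setIntegral_mono_set hint ?_ ?_
    · filter_upwards [ae_restrict_mem measurableSet_Ioi] with x hx
      have hx' : (0:ℝ) < x := hx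
      exact mul_nonneg (mul_nonneg (Real.rpow_nonneg hx'.le m) (Real.exp_nonneg _))
        (besselI_nonneg hn (by positivity))
    · exact HasSubset.Subset.eventuallyLE (Set.Ioi_subset_Ioi hb)
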